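/- arXiv:1201.4941 — 2 statements merged into one kernel-verified Lean document; each statement's English description precedes it below -/
import Mathlib

section
/- For any positive integers a and b, ∑_{k≥0} [a+b choose k]_q · A_{k,a-1}(q) = ∑_{k≥0} [a+b choose k]_q · A_{k,b-1}(q), where [n choose k]_q is the q-binomial coefficient and A_{n,k}(q) are the q-Eulerian numbers. -/
open Polynomial PowerSeries

/-- The variable `q` in the field `ℚ(q)` of rational functions. -/
noncomputable def qq : RatFunc ℚ := RatFunc.X

/-- The q-shifted factorial `(q;q)_n = ∏_{i=1}^n (1 - q^i)`. -/
noncomputable def qfac (n : ℕ) : RatFunc ℚ := ∏ i ∈ Finset.range n, (1 - qq ^ (i + 1))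

/-- The q-exponential `e(z;q) = ∑ z^n/(q;q)_n`, as a power series in `z` over `ℚ(q)[t]`. -/
noncomputable def qexpZ : PowerSeries (Polynomial (RatFunc ℚ)) :=
  PowerSeries.mk fun n => Polynomial.C (qfac n)⁻¹

/-- `e(tz;q) = ∑ t^n z^n/(q;q)_n`, as a power series in `z` over `ℚ(q)[t]`. -/
noncomputable def qexpTZ : PowerSeries (Polynomial (RatFunc ℚ)) :=
  PowerSeries.mk fun n => Polynomial.X ^ n * Polynomial.C (qfac n)⁻¹

/-- The q-binomial coefficient `[n choose k]_q ∈ ℚ(q)`. -/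
noncomputable def qbinom (n k : ℕ) : RatFunc ℚ :=
  if k ≤ n then qfac n / (qfac (n - k) * qfac k) else 0

variable {K : Type*} [Field K]

lemma qq_pow_ne_one (m : ℕ) (hm : 0 < m) : (qq : RatFunc ℚ) ^ m ≠ 1 := by
  intro h
  have h2 : (algebraMap (Polynomial ℚ) (RatFunc ℚ)) (Polynomial.X ^ m) =
      (algebraMap (Polynomial ℚ) (RatFunc ℚ)) 1 := by
    simpa [qq, map_pow, RatFunc.algebraMap_X] using h
  have h3 : (Polynomial.X : Polynomial ℚ) ^ m = 1 :=
    IsFractionRing.injective (Polynomial ℚ) (RatFunc ℚ) h2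
  have := congrArg (fun p => Polynomial.coeff p 0) h3
  simp [Polynomial.coeff_X_pow, hm.ne'] at this
  omega

lemma qfac_ne_zero (n : ℕ) : qfac n ≠ 0 := by
  unfold qfac
  apply Finset.prod_ne_zero_iff.mpr
  intro i _ h
  exact qq_pow_ne_one (i+1) (Nat.succ_pos i) (by linear_combination -h)

lemma qbinom_eq (n k : ℕ) (h : k ≤ n) :
    qbinom n k = qfac n * (qfac (n-k))⁻¹ * (qfac k)⁻¹ := by
  rw [qbinom, if_pos h, div_eq_mul_inv, mul_inv, mul_assoc]

lemma key (A : ℕ → Polynomial (RatFunc ℚ))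
    (hA : (qexpTZ - PowerSeries.C (R := Polynomial (RatFunc ℚ)) Polynomial.X * qexpZ) *
        PowerSeries.mk (fun n => A n * Polynomial.C (qfac n)⁻¹) = qexpZ - qexpTZ)
    (n : ℕ) :
    ∑ k ∈ Finset.range (n+1),
      Polynomial.C (qbinom n k) * (Polynomial.X ^ (n-k) - Polynomial.X) * A k
      = 1 - Polynomial.X ^ n := by
  have h := congrArg (PowerSeries.coeff n) hA
  rw [PowerSeries.coeff_mul, Finset.Nat.sum_antidiagonal_eq_sum_range_succ_mk] at h
  simp only [map_sub, PowerSeries.coeff_C_mul, qexpZ, qexpTZ, PowerSeries.coeff_mk] at h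
  rw [← Finset.sum_range_reflect] at h
  have h2 : ∀ k ∈ Finset.range (n+1),
      (Polynomial.X ^ (n+1-1-k) * Polynomial.C (qfac (n+1-1-k))⁻¹ -
        Polynomial.X * Polynomial.C (qfac (n+1-1-k))⁻¹) *
        (A (n - (n+1-1-k)) * Polynomial.C (qfac (n - (n+1-1-k)))⁻¹)
      = (Polynomial.X ^ (n-k) * Polynomial.C (qfac (n-k))⁻¹ -
        Polynomial.X * Polynomial.C (qfac (n-k))⁻¹) *
        (A k * Polynomial.C (qfac k)⁻¹) := by
    intro k hk
    have hk' : k ≤ n := Nat.lt_succ_iff.mp (Finset.mem_range.mp hk)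
    rw [show n+1-1-k = n-k from by omega, show n-(n-k) = k from by omega]
  rw [Finset.sum_congr rfl h2] at h
  have h3 := congrArg (fun p => Polynomial.C (qfac n) * p) h
  simp only [Finset.mul_sum, mul_sub] at h3
  have hC : Polynomial.C (qfac n) * Polynomial.C (qfac n)⁻¹ = (1 : Polynomial (RatFunc ℚ)) := by
    rw [← Polynomial.C_mul, mul_inv_cancel₀ (qfac_ne_zero n), Polynomial.C_1]
  calc ∑ k ∈ Finset.range (n+1),
      Polynomial.C (qbinom n k) * (Polynomial.X ^ (n-k) - Polynomial.X) * A k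
      = ∑ k ∈ Finset.range (n+1), Polynomial.C (qfac n) *
        ((Polynomial.X ^ (n-k) * Polynomial.C (qfac (n-k))⁻¹ -
          Polynomial.X * Polynomial.C (qfac (n-k))⁻¹) *
          (A k * Polynomial.C (qfac k)⁻¹)) := by
        apply Finset.sum_congr rfl
        intro k hk
        have hk' : k ≤ n := Nat.lt_succ_iff.mp (Finset.mem_range.mp hk)
        rw [qbinom_eq n k hk']
        simp only [Polynomial.C_mul]
        ring
    _ = Polynomial.C (qfac n) * Polynomial.C (qfac n)⁻¹ -
        Polynomial.C (qfac n) * (Polynomial.X ^ n * Polynomial.C (qfac n)⁻¹) := h3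
    _ = 1 - Polynomial.X ^ n := by
        rw [hC]
        congr 1
        rw [mul_comm (Polynomial.X ^ n), ← mul_assoc, hC, one_mul]
-- helper lemmas standalone over a field
variable {K : Type*} [Field K]

lemma myreflect_sub (N : ℕ) (f g : K[X]) :
    reflect N (f - g) = reflect N f - reflect N g := by
  ext i; simp [coeff_reflect]

lemma myreflect_sum {α : Type*} (N : ℕ) (s : Finset α) (f : α → K[X]) :
    reflect N (∑ k ∈ s, f k) = ∑ k ∈ s, reflect N (f k) := by
  ext i; simp [coeff_reflect, Polynomial.finset_sum_coeff]

lemma myreflect_succ {p : K[X]} {N : ℕ} (hp : p.natDegree ≤ N) :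
    reflect (N + 1) p = Polynomial.X * reflect N p := by
  ext i
  cases i with
  | zero =>
    have h1 : (revAt (N+1)) 0 = N+1 := revAt_le (Nat.zero_le _)
    simp [coeff_reflect, h1, coeff_eq_zero_of_natDegree_lt (lt_of_le_of_lt hp (Nat.lt_succ_self N)),
      Polynomial.mul_coeff_zero]
  | succ i =>
    rw [coeff_reflect, Polynomial.coeff_X_mul, coeff_reflect]
    by_cases h : i ≤ N
    · rw [revAt_le h, revAt_le (by omega : i + 1 ≤ N + 1)]
      congr 1; omega
    · have h1 : (revAt N) i = i := by exact revAt_eq_self_of_lt (by omega)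
      have h2 : (revAt (N+1)) (i+1) = i+1 := by
        exact revAt_eq_self_of_lt (by omega)
      rw [h1, h2]
      rw [coeff_eq_zero_of_natDegree_lt (by omega), coeff_eq_zero_of_natDegree_lt (by omega)]

lemma myreflect_one_sub_X : reflect 1 ((1 : K[X]) - Polynomial.X) = Polynomial.X - 1 := by
  have : ((1 : K[X]) - Polynomial.X) = Polynomial.X^0 - Polynomial.X^1 := by simp
  rw [this, myreflect_sub, reflect_monomial, reflect_monomial,
    revAt_le (by omega : 0 ≤ 1), revAt_le (le_refl 1)]
  simp

lemma myreflect_pow_sub_X {m : ℕ} (hm : 1 ≤ m) :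
    reflect m ((Polynomial.X : K[X])^m - Polynomial.X) = 1 - Polynomial.X^(m-1) := by
  have : ((Polynomial.X : K[X])^m - Polynomial.X) = Polynomial.X^m - Polynomial.X^1 := by simp
  rw [this, myreflect_sub, reflect_monomial, reflect_monomial,
    revAt_le (le_refl m), revAt_le hm]
  simp

lemma one_sub_X_ne_zero : (1 : K[X]) - Polynomial.X ≠ 0 := by
  intro h
  have := congrArg (fun p => Polynomial.coeff p 1) h
  simp [Polynomial.coeff_one] at this

lemma natDegree_one_sub_X : ((1 : K[X]) - Polynomial.X).natDegree = 1 := by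
  have : ((1 : K[X]) - Polynomial.X) = -(Polynomial.X - Polynomial.C 1) := by rw [Polynomial.C_1]; ring
  rw [this, natDegree_neg, natDegree_X_sub_C]

lemma qbinom_self (n : ℕ) : qbinom n n = 1 := by
  rw [qbinom, if_pos (le_refl n)]
  have h0 : qfac (n - n) = 1 := by simp [qfac]
  rw [h0, one_mul, div_self (qfac_ne_zero n)]

lemma recur (A : ℕ → Polynomial (RatFunc ℚ))
    (hkey : ∀ n, ∑ k ∈ Finset.range (n+1),
      Polynomial.C (qbinom n k) * (Polynomial.X ^ (n-k) - Polynomial.X) * A k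
      = 1 - Polynomial.X ^ n) (n : ℕ) :
    (1 - Polynomial.X) * A n = (1 - Polynomial.X ^ n) -
      ∑ k ∈ Finset.range n,
        Polynomial.C (qbinom n k) * (Polynomial.X ^ (n-k) - Polynomial.X) * A k := by
  have h := hkey n
  rw [Finset.sum_range_succ, qbinom_self] at h
  simp only [Nat.sub_self, pow_zero, Polynomial.C_1, one_mul] at h
  linear_combination h

lemma A_zero (A : ℕ → Polynomial (RatFunc ℚ))
    (hkey : ∀ n, ∑ k ∈ Finset.range (n+1),
      Polynomial.C (qbinom n k) * (Polynomial.X ^ (n-k) - Polynomial.X) * A k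
      = 1 - Polynomial.X ^ n) : A 0 = 0 := by
  have h := recur A hkey 0
  simp at h
  rcases h with h' | h'
  · exact absurd h' one_sub_X_ne_zero
  · exact h'

lemma myreflect_of_pos {K : Type*} [Field K] {p : Polynomial K} {N : ℕ}
    (hN : 1 ≤ N) (hp : p.natDegree ≤ N - 1) :
    Polynomial.reflect N p = Polynomial.X * Polynomial.reflect (N-1) p := by
  obtain ⟨M, rfl⟩ : ∃ M, N = M + 1 := ⟨N-1, by omega⟩
  simpa using myreflect_succ (by simpa using hp)

lemma X_sub_one_ne_zero : (Polynomial.X : Polynomial (RatFunc ℚ)) - 1 ≠ 0 := by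
  intro h
  apply one_sub_X_ne_zero (K := RatFunc ℚ)
  linear_combination -h

lemma struct (A : ℕ → Polynomial (RatFunc ℚ))
    (hkey : ∀ n, ∑ k ∈ Finset.range (n+1),
      Polynomial.C (qbinom n k) * (Polynomial.X ^ (n-k) - Polynomial.X) * A k
      = 1 - Polynomial.X ^ n) :
    ∀ n, (A n).natDegree ≤ n - 1 ∧ Polynomial.reflect (n-1) (A n) = A n := by
  intro n
  induction n using Nat.strong_induction_on with
  | _ n IH =>
  rcases Nat.eq_zero_or_pos n with rfl | hn
  · rw [A_zero A hkey]; simp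
  · have hrec := recur A hkey n
    have hterm_predeg : ∀ k, k < n → 1 ≤ k →
        (Polynomial.C (qbinom n k) * (Polynomial.X ^ (n-k) - Polynomial.X)).natDegree ≤ n - k := by
      intro k hk' hkpos
      apply le_trans (Polynomial.natDegree_mul_le)
      have h2 : ((Polynomial.X : Polynomial (RatFunc ℚ)) ^ (n-k) - Polynomial.X).natDegree ≤ n - k := by
        apply le_trans (Polynomial.natDegree_sub_le _ _)
        rw [Polynomial.natDegree_X_pow, Polynomial.natDegree_X]
        omega
      simpa [Polynomial.natDegree_C] using h2
    have hterm_deg : ∀ k ∈ Finset.range n,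
        (Polynomial.C (qbinom n k) * (Polynomial.X ^ (n-k) - Polynomial.X) * A k).natDegree
          ≤ n := by
      intro k hk
      have hk' : k < n := Finset.mem_range.mp hk
      rcases Nat.eq_zero_or_pos k with rfl | hkpos
      · rw [A_zero A hkey]; simp
      · apply le_trans (Polynomial.natDegree_mul_le)
        have := (IH k hk').1
        have := hterm_predeg k hk' hkpos
        omega
    have hBound : ((1 - Polynomial.X) * A n).natDegree ≤ n := by
      rw [hrec]
      apply le_trans (Polynomial.natDegree_sub_le _ _)
      apply max_le
      · apply le_trans (Polynomial.natDegree_sub_le _ _)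
        rw [Polynomial.natDegree_one, Polynomial.natDegree_X_pow]
        omega
      · exact Polynomial.natDegree_sum_le_of_forall_le _ _ hterm_deg
    have hdeg : (A n).natDegree ≤ n - 1 := by
      by_cases hz : A n = 0
      · simp [hz]
      · have hmul := Polynomial.natDegree_mul (one_sub_X_ne_zero (K := RatFunc ℚ)) hz
        rw [natDegree_one_sub_X] at hmul
        omega
    refine ⟨hdeg, ?_⟩
    have hrefl := congrArg (Polynomial.reflect n) hrec
    rw [myreflect_sub, myreflect_sum] at hrefl
    have hL : Polynomial.reflect n ((1 - Polynomial.X) * A n)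
        = (Polynomial.X - 1) * Polynomial.reflect (n-1) (A n) := by
      have h := Polynomial.reflect_mul (1 - Polynomial.X) (A n)
        (F := 1) (G := n-1) (le_of_eq natDegree_one_sub_X) hdeg
      rw [show 1 + (n-1) = n from by omega] at h
      rw [h, myreflect_one_sub_X]
    have hXn : Polynomial.reflect n ((1 : Polynomial (RatFunc ℚ)) - Polynomial.X ^ n)
        = Polynomial.X ^ n - 1 := by
      have e : ((1 : Polynomial (RatFunc ℚ)) - Polynomial.X ^ n)
          = Polynomial.X ^ 0 - Polynomial.X ^ n := by simp
      rw [e, myreflect_sub, Polynomial.reflect_monomial, Polynomial.reflect_monomial,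
        Polynomial.revAt_le (Nat.zero_le n), Polynomial.revAt_le (le_refl n)]
      simp
    have hterm : ∀ k ∈ Finset.range n,
        Polynomial.reflect n
          (Polynomial.C (qbinom n k) * (Polynomial.X ^ (n-k) - Polynomial.X) * A k)
        = -(Polynomial.C (qbinom n k) * (Polynomial.X ^ (n-k) - Polynomial.X) * A k) := by
      intro k hk
      have hk' : k < n := Finset.mem_range.mp hk
      rcases Nat.eq_zero_or_pos k with rfl | hkpos
      · rw [A_zero A hkey]; simp
      · obtain ⟨hdk, hrk⟩ := IH k hk'
        have hmul := Polynomial.reflect_mul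
          (Polynomial.C (qbinom n k) * (Polynomial.X ^ (n-k) - Polynomial.X)) (A k)
          (F := n-k) (G := k) (hterm_predeg k hk' hkpos) (le_trans hdk (by omega))
        rw [show (n-k) + k = n from by omega] at hmul
        have hk1 : Polynomial.reflect k (A k) = Polynomial.X * A k := by
          rw [myreflect_of_pos hkpos hdk, hrk]
        rw [hmul, Polynomial.reflect_C_mul, myreflect_pow_sub_X (by omega : 1 ≤ n - k), hk1]
        have hx : (Polynomial.X : Polynomial (RatFunc ℚ)) ^ (n-k)
            = Polynomial.X ^ (n-k-1) * Polynomial.X := by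
          rw [← pow_succ]; congr 1; omega
        rw [hx]
        ring
    rw [Finset.sum_congr rfl hterm, hL, hXn, Finset.sum_neg_distrib] at hrefl
    have hfin : (Polynomial.X - 1) * Polynomial.reflect (n-1) (A n)
        = (Polynomial.X - 1) * A n := by
      rw [hrefl]; linear_combination hrec
    exact mul_left_cancel₀ X_sub_one_ne_zero hfin


/-- The symmetrical q-Eulerian identity
`∑_{k≥0} [a+b choose k]_q A_{k,a-1}(q) = ∑_{k≥0} [a+b choose k]_q A_{k,b-1}(q)`,
where `A_{k,j}(q)` is the coefficient of `t^j` in the q-Eulerian polynomial `A k`.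
(The q-binomial vanishes for `k > a+b`, so the sum over `k ≥ 0` reduces to
`0 ≤ k ≤ a+b`.) -/
theorem symmetrical_qEulerian_identity (A : ℕ → Polynomial (RatFunc ℚ))
    (hA : (qexpTZ - PowerSeries.C (R := Polynomial (RatFunc ℚ)) Polynomial.X * qexpZ) *
        PowerSeries.mk (fun n => A n * Polynomial.C (qfac n)⁻¹) = qexpZ - qexpTZ)
    (a b : ℕ) (ha : 0 < a) (hb : 0 < b) :
    ∑ k ∈ Finset.range (a + b + 1), qbinom (a + b) k * (A k).coeff (a - 1) =
    ∑ k ∈ Finset.range (a + b + 1), qbinom (a + b) k * (A k).coeff (b - 1) := by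
  have hkey := key A hA
  have hs := struct A hkey
  set n := a + b with hn
  have han : a < n := by omega
  have h := congrArg (fun p => Polynomial.coeff p a) (hkey n)
  simp only [Polynomial.finset_sum_coeff, Polynomial.coeff_sub] at h
  have hr : (1 : Polynomial (RatFunc ℚ)).coeff a - (Polynomial.X ^ n).coeff a = 0 := by
    rw [Polynomial.coeff_one, Polynomial.coeff_X_pow, if_neg ha.ne', if_neg han.ne]
    ring
  rw [hr] at h
  have hcoeff : ∀ k ∈ Finset.range (n+1),
      (Polynomial.C (qbinom n k) * (Polynomial.X ^ (n-k) - Polynomial.X) * A k).coeff a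
      = qbinom n k * (A k).coeff (b-1) - qbinom n k * (A k).coeff (a-1) := by
    intro k hk
    have hk' : k ≤ n := Nat.lt_succ_iff.mp (Finset.mem_range.mp hk)
    have e : Polynomial.C (qbinom n k) * (Polynomial.X ^ (n-k) - Polynomial.X) * A k
        = Polynomial.C (qbinom n k) * (A k * Polynomial.X ^ (n-k))
          - Polynomial.C (qbinom n k) * (A k * Polynomial.X ^ 1) := by ring
    rw [e, Polynomial.coeff_sub, Polynomial.coeff_C_mul, Polynomial.coeff_C_mul,
      Polynomial.coeff_mul_X_pow', Polynomial.coeff_mul_X_pow', if_pos (Nat.one_le_iff_ne_zero.mpr ha.ne')]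
    congr 2
    · by_cases hc : n - k ≤ a
      · rw [if_pos hc]
        have hkb : b ≤ k := by omega
        have hk1 : 1 ≤ k := le_trans hb hkb
        obtain ⟨hdk, hrk⟩ := hs k
        have hi : a - (n-k) = k - b := by omega
        rw [hi]
        have hc2 := congrArg (fun p => Polynomial.coeff p (k-b)) hrk
        simp only [Polynomial.coeff_reflect] at hc2
        rw [Polynomial.revAt_le (by omega : k - b ≤ k - 1),
          (by omega : k - 1 - (k - b) = b - 1)] at hc2
        exact hc2.symm
      · rw [if_neg hc]
        have hkb : k < b := by omega
        rcases Nat.eq_zero_or_pos k with rfl | hkpos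
        · rw [A_zero A hkey]; simp
        · exact (Polynomial.coeff_eq_zero_of_natDegree_lt
            (lt_of_le_of_lt (hs k).1 (by omega))).symm
  rw [Finset.sum_congr rfl hcoeff, Finset.sum_sub_distrib] at h
  exact (sub_eq_zero.mp h).symm
end

section
/- Let A_{0}, A_{1}, ..., A_r be the contents of the factors in the hook factorization π = p·τ_1⋯τ_r of a permutation π ∈ S_n. Then inv(π) − lec(π) equals the number of pairs (k,l) with k ∈ A_i, l ∈ A_j, k > l, and i < j. -/
/-- An increasing word (possibly empty). -/
def IsIncr (w : List ℕ) : Prop := w.Chain' (· < ·)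

/-- A hook: a word `x₁x₂⋯x_m` of distinct letters with `x₁ > x₂` and
`x₂ < x₃ < ⋯ < x_m` (in particular `m ≥ 2`). -/
def IsHook (w : List ℕ) : Prop :=
  w.Nodup ∧ ∃ x y rest, w = x :: y :: rest ∧ y < x ∧ (y :: rest).Chain' (· < ·)

/-- The number of inversions of a word: pairs of positions `i < j` with `w_i > w_j`. -/
def invList : List ℕ → ℕ
  | [] => 0
  | x :: xs => xs.countP (fun y => decide (y < x)) + invList xs

/-- The number of "cross inversions" of a sequence of blocks: pairs `(k, l)` with
`k` in an earlier block, `l` in a later block, and `k > l`. -/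
def crossInv : List (List ℕ) → ℕ
  | [] => 0
  | b :: bs => (b.map (fun x => bs.flatten.countP (fun y => decide (y < x)))).sum + crossInv bs

lemma invList_append (a b : List ℕ) :
    invList (a ++ b) =
      invList a + (a.map (fun x => b.countP (fun y => decide (y < x)))).sum + invList b := by
  induction a with
  | nil => simp [invList]
  | cons x a ih =>
    simp only [List.cons_append, invList, List.append_eq, List.countP_append, List.map_cons,
      List.sum_cons, ih]
    omega

lemma invList_flatten (bs : List (List ℕ)) :
    invList bs.flatten = (bs.map invList).sum + crossInv bs := by
  induction bs with
  | nil => simp [invList, crossInv]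
  | cons b bs ih =>
    simp only [List.flatten_cons, invList_append, ih, crossInv, List.map_cons, List.sum_cons]
    omega

lemma invList_of_chain (w : List ℕ) (h : w.Chain' (· < ·)) : invList w = 0 := by
  induction w with
  | nil => rfl
  | cons x xs ih =>
    rw [List.Chain', List.isChain_cons] at h
    have hp := (List.isChain_iff_pairwise.mp (List.isChain_cons.mpr h))
    simp only [invList, ih h.2, Nat.add_zero]
    rw [List.countP_eq_zero]
    intro y hy
    simpa using (List.rel_of_pairwise_cons hp hy).not_gt

/-- If `π = p·τ₁⋯τ_r` is the hook factorization of a permutation of `{1,…,n}`,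
then `inv(π) − lec(π)` equals the number of pairs `(k,l)` with `k ∈ A_i`,
`l ∈ A_j`, `k > l` and `i < j`, where `A₀,…,A_r` are the contents of the
factors (stated additively: `inv(π) = lec(π) + crossInv`). -/
theorem inv_sub_lec_eq_crossInv (n : ℕ) (p : List ℕ) (τs : List (List ℕ))
    (hp : IsIncr p) (hτ : ∀ τ ∈ τs, IsHook τ)
    (hperm : (p ++ τs.flatten).Perm (List.range' 1 n)) :
    invList (p ++ τs.flatten) = (τs.map invList).sum + crossInv (p :: τs) := by
  rw [invList_append, invList_of_chain p hp, invList_flatten]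
  simp only [crossInv]
  omega
end
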